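/- Let n be an odd positive integer coprime to the prime power q. A splitting of n over F_q (a partition {S₀,S₁} of the nonzero residues mod n into unions of q-ary cyclotomic cosets with aS₀ = S₁, aS₁ = S₀ for some a coprime to n) exists if and only if q is a quadratic residue modulo n. -/

import Mathlib

open scoped Classical

/-- A "splitting coloring" of the nonzero residues mod `m`. -/
def Spl (q m : ℕ) : Prop :=
  ∃ (a : (ZMod m)ˣ) (c : ZMod m → Prop), ∀ x : ZMod m, x ≠ 0 →
    ((c ((q : ZMod m) * x) ↔ c x) ∧ (c ((a : ZMod m) * x) ↔ ¬ c x))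

lemma isSquare_cast {m d : ℕ} (hd : d ∣ m) {q : ℕ} (h : IsSquare (q : ZMod m)) :
    IsSquare (q : ZMod d) := by
  obtain ⟨r, hr⟩ := h
  refine ⟨ZMod.castHom hd (ZMod d) r, ?_⟩
  rw [← map_mul, ← hr, map_natCast]

lemma odd_of_odd_pow {p e : ℕ} (he : 0 < e) (h : Odd (p ^ e)) : Odd p := by
  have hpe : p ^ e = p * p ^ (e - 1) := by
    rw [← pow_succ']; congr 1; omega
  rw [hpe, Nat.odd_mul] at h
  exact h.1

/-- A finset closed under multiplication by `g` has cardinality divisible by `orderOf g`. -/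
lemma orderOf_dvd_card_of_closed {G : Type*} [Group G] [Fintype G] [DecidableEq G] (g : G) :
    ∀ N (S : Finset G), S.card ≤ N → (∀ u ∈ S, g * u ∈ S) → orderOf g ∣ S.card := by
  intro N
  induction N with
  | zero => intro S hS _; interval_cases h : S.card; simp
  | succ N ih =>
    intro S hS hcl
    rcases S.eq_empty_or_nonempty with rfl | ⟨s, hs⟩
    · simp
    · have hpow : ∀ k, g ^ k * s ∈ S := by
        intro k; induction k with
        | zero => simpa using hs
        | succ k ih2 =>
          have := hcl _ ih2
          rwa [← mul_assoc, ← pow_succ'] at this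
      have hd0 : 0 < orderOf g := orderOf_pos g
      set C : Finset G := (Finset.range (orderOf g)).image (fun k => g ^ k * s) with hC
      have hCS : C ⊆ S := by
        intro x hx
        simp only [hC, Finset.mem_image, Finset.mem_range] at hx
        obtain ⟨k, _, rfl⟩ := hx; exact hpow k
      have hCcard : C.card = orderOf g := by
        rw [hC, Finset.card_image_of_injOn, Finset.card_range]
        intro i hi j hj hij
        simp only [Finset.coe_range, Set.mem_Iio] at hi hj
        exact pow_injOn_Iio_orderOf hi hj (mul_right_cancel hij)
      have hclosed' : ∀ u ∈ S \ C, g * u ∈ S \ C := by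
        intro u hu
        rw [Finset.mem_sdiff] at hu ⊢
        refine ⟨hcl u hu.1, fun hmem => hu.2 ?_⟩
        simp only [hC, Finset.mem_image, Finset.mem_range] at hmem ⊢
        obtain ⟨k, hk, hk2⟩ := hmem
        rcases Nat.eq_zero_or_pos k with rfl | hkpos
        · refine ⟨orderOf g - 1, by omega, ?_⟩
          have h1 : g * (g ^ (orderOf g - 1) * s) = g ^ orderOf g * s := by
            rw [← mul_assoc, ← pow_succ']; congr 2; omega
          rw [pow_orderOf_eq_one, one_mul] at h1
          have h2 : g * (g ^ (orderOf g - 1) * s) = g * u := by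
            rw [h1, ← hk2, pow_zero, one_mul]
          exact mul_left_cancel h2
        · refine ⟨k - 1, by omega, ?_⟩
          have h1 : g ^ k * s = g * (g ^ (k - 1) * s) := by
            rw [← mul_assoc, ← pow_succ']; congr 2; omega
          rw [h1] at hk2
          exact mul_left_cancel hk2
      have hcard : (S \ C).card + C.card = S.card := Finset.card_sdiff_add_card_eq_card hCS
      have hle : (S \ C).card ≤ N := by omega
      have hdvd := ih (S \ C) hle hclosed'
      rw [← hcard, hCcard]
      exact Nat.dvd_add hdvd dvd_rfl

/-- Restriction of a splitting mod `m` to a splitting mod `p` for `p ∣ m`. -/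
lemma spl_restrict (q m p : ℕ) (hm : 0 < m) (hp : p.Prime) (hpm : p ∣ m)
    (hs : Spl q m) : Spl q p := by
  obtain ⟨a, c, hc⟩ := hs
  haveI : NeZero m := ⟨hm.ne'⟩
  haveI : NeZero p := ⟨hp.pos.ne'⟩
  obtain ⟨k, hk⟩ := hpm
  have hk0 : 0 < k := by
    rcases Nat.eq_zero_or_pos k with rfl | hh
    · omega
    · exact hh
  set ι : ZMod p → ZMod m := fun y => (k : ZMod m) * ((y.val : ℕ) : ZMod m) with hι
  have hι0 : ∀ y : ZMod p, ι y = 0 ↔ y = 0 := by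
    intro y
    constructor
    · intro hy
      have h1 : (((k * y.val : ℕ) : ZMod m)) = 0 := by push_cast; exact hy
      rw [ZMod.natCast_eq_zero_iff] at h1
      obtain ⟨t, ht⟩ := h1
      rw [hk] at ht
      have hyv : y.val = p * t := by
        have hkc : k * y.val = k * (p * t) := by rw [ht]; ring
        exact Nat.eq_of_mul_eq_mul_left hk0 hkc
      have : y.val = 0 := Nat.eq_zero_of_dvd_of_lt ⟨t, hyv⟩ (ZMod.val_lt y)
      exact (ZMod.val_eq_zero y).mp this
    · rintro rfl
      simp [hι]
  have hmul : ∀ (t : ℕ) (y : ZMod p), ι ((t : ZMod p) * y) = (t : ZMod m) * ι y := by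
    intro t y
    have hval : ((t : ZMod p) * y).val = (t * y.val) % p := by
      rw [ZMod.val_mul, ZMod.val_natCast, Nat.mod_mul_mod]
    have hid : k * (t * y.val) = k * ((t * y.val) % p) + m * ((t * y.val) / p) := by
      conv_lhs => rw [← Nat.mod_add_div (t * y.val) p]
      rw [hk]; ring
    have hcast := congrArg (fun z : ℕ => (z : ZMod m)) hid
    push_cast at hcast
    rw [ZMod.natCast_self, zero_mul, add_zero] at hcast
    show (k : ZMod m) * ((((t : ZMod p) * y).val : ℕ) : ZMod m)
        = (t : ZMod m) * ((k : ZMod m) * ((y.val : ℕ) : ZMod m))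
    rw [hval, ← hcast]
    ring
  set A : ℕ := (a : ZMod m).val with hA
  have hAco : A.Coprime m := ZMod.val_coe_unit_coprime a
  have hAp : A.Coprime p := Nat.Coprime.coprime_dvd_right ⟨k, hk⟩ hAco
  have hAm : ((A : ℕ) : ZMod m) = (a : ZMod m) := by
    rw [hA, ZMod.natCast_val, ZMod.cast_id]
  refine ⟨ZMod.unitOfCoprime A hAp, fun y => c (ι y), fun y hy => ?_⟩
  have hy0 : ι y ≠ 0 := fun hh => hy ((hι0 y).mp hh)
  constructor
  · show c (ι ((q : ZMod p) * y)) ↔ c (ι y)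
    rw [hmul q y]
    exact (hc _ hy0).1
  · show c (ι (((ZMod.unitOfCoprime A hAp : (ZMod p)ˣ) : ZMod p) * y)) ↔ ¬ c (ι y)
    rw [ZMod.coe_unitOfCoprime, hmul A y, hAm]
    exact (hc _ hy0).2

/-- Counting: a splitting mod an odd prime `p` forces `q` to be a square mod `p`. -/
lemma spl_prime_isSquare (q p : ℕ) (hp : p.Prime) (hodd : Odd p) (hc : Nat.Coprime q p)
    (hs : Spl q p) : IsSquare (q : ZMod p) := by
  haveI : Fact p.Prime := ⟨hp⟩
  obtain ⟨a, c, hcc⟩ := hs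
  classical
  set Q : (ZMod p)ˣ := ZMod.unitOfCoprime q hc with hQ
  have hQc : ((Q : (ZMod p)ˣ) : ZMod p) = (q : ZMod p) := ZMod.coe_unitOfCoprime q hc
  set S : Finset (ZMod p)ˣ := Finset.univ.filter (fun u => c (u : ZMod p)) with hS
  set T : Finset (ZMod p)ˣ := Finset.univ.filter (fun u => ¬ c (u : ZMod p)) with hT
  have hclosed : ∀ u ∈ S, Q * u ∈ S := by
    intro u hu
    rw [hS, Finset.mem_filter] at hu ⊢
    refine ⟨Finset.mem_univ _, ?_⟩
    have hcu := (hcc (u : ZMod p) (Units.ne_zero u)).1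
    rw [Units.val_mul, hQc]
    exact hcu.mpr hu.2
  have hbij : S.card = T.card := by
    apply Finset.card_bij (fun u _ => a * u)
    · intro u hu
      rw [hS, Finset.mem_filter] at hu
      rw [hT, Finset.mem_filter]
      refine ⟨Finset.mem_univ _, ?_⟩
      have h2 := (hcc (u : ZMod p) (Units.ne_zero u)).2
      rw [Units.val_mul]
      exact fun hau => (h2.mp hau) hu.2
    · intro u _ v _ huv
      exact mul_left_cancel huv
    · intro t ht
      refine ⟨a⁻¹ * t, ?_, by rw [← mul_assoc]; simp⟩
      rw [hS, Finset.mem_filter]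
      refine ⟨Finset.mem_univ _, ?_⟩
      rw [hT, Finset.mem_filter] at ht
      have h2 := (hcc ((a⁻¹ * t : (ZMod p)ˣ) : ZMod p) (Units.ne_zero _)).2
      have heq : ((a : ZMod p) * ((a⁻¹ * t : (ZMod p)ˣ) : ZMod p)) = (t : ZMod p) := by
        rw [← Units.val_mul, ← mul_assoc]
        simp
      rw [heq] at h2
      by_contra hnc
      exact ht.2 (h2.mpr hnc)
  have htotal : S.card + T.card = p - 1 := by
    rw [hS, hT, Finset.card_filter_add_card_filter_not, Finset.card_univ,
      ZMod.card_units]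
  have hdvd : orderOf Q ∣ S.card := orderOf_dvd_card_of_closed Q S.card S le_rfl hclosed
  have hpow : Q ^ ((p - 1) / 2) = 1 := by
    apply orderOf_dvd_iff_pow_eq_one.mp
    have hcard : S.card = (p - 1) / 2 := by omega
    rwa [hcard] at hdvd
  have hne : (q : ZMod p) ≠ 0 := by
    rw [← hQc]; exact Units.ne_zero Q
  apply (ZMod.euler_criterion p hne).mpr
  have hps : p / 2 = (p - 1) / 2 := by
    have := Nat.odd_iff.mp hodd
    omega
  have hval : ((Q : ZMod p)) ^ ((p - 1) / 2) = 1 := by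
    rw [← Units.val_pow_eq_pow_val, hpow, Units.val_one]
  rw [hps, ← hQc]
  exact hval

/-- Lift squares from mod `p` to mod `p^e` for odd prime `p`. -/
lemma isSquare_lift (q p e : ℕ) (hp : p.Prime) (hodd : Odd p) (hc : Nat.Coprime q p)
    (he : 0 < e) (hsq : IsSquare (q : ZMod p)) : IsSquare (q : ZMod (p ^ e)) := by
  haveI : Fact p.Prime := ⟨hp⟩
  haveI : NeZero (p ^ e) := ⟨pow_ne_zero e hp.pos.ne'⟩
  have hdvd : p ∣ p ^ e := dvd_pow_self p he.ne'
  set π := ZMod.unitsMap (m := p ^ e) (n := p) hdvd with hπ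
  have hsurj : Function.Surjective π := ZMod.unitsMap_surjective hdvd
  have hcpe : Nat.Coprime q (p ^ e) := Nat.Coprime.pow_right e hc
  set Qe : (ZMod (p ^ e))ˣ := ZMod.unitOfCoprime q hcpe with hQe
  set Qp : (ZMod p)ˣ := ZMod.unitOfCoprime q hc with hQp
  have hπQ : π Qe = Qp := by
    apply Units.ext
    show (ZMod.castHom hdvd (ZMod p)) ((Qe : ZMod (p ^ e))) = (Qp : ZMod p)
    rw [ZMod.coe_unitOfCoprime, ZMod.coe_unitOfCoprime, map_natCast]
  obtain ⟨y, hy⟩ := hsq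
  have hqne : (q : ZMod p) ≠ 0 := by
    rw [← ZMod.coe_unitOfCoprime q hc]
    exact Units.ne_zero _
  have hyne : y ≠ 0 := by
    rintro rfl
    rw [mul_zero] at hy
    exact hqne hy
  set Y : (ZMod p)ˣ := Units.mk0 y hyne with hY
  have hYQ : Y * Y = Qp := by
    apply Units.ext
    rw [Units.val_mul]
    show y * y = ((Qp : (ZMod p)ˣ) : ZMod p)
    rw [ZMod.coe_unitOfCoprime, hy]
  obtain ⟨Z, hZ⟩ := hsurj Y
  set w : (ZMod (p ^ e))ˣ := Qe * (Z * Z)⁻¹ with hw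
  have hπw : π w = 1 := by
    rw [hw, map_mul, map_inv, map_mul, hZ, hπQ, hYQ]
    simp
  have hwker : w ∈ π.ker := hπw
  have hcard : Nat.card π.ker * (p - 1) = p ^ (e - 1) * (p - 1) := by
    have h1 : Nat.card (ZMod (p ^ e))ˣ
        = Nat.card ((ZMod (p ^ e))ˣ ⧸ π.ker) * Nat.card π.ker :=
      Subgroup.card_eq_card_quotient_mul_card_subgroup π.ker
    have h2 : Nat.card ((ZMod (p ^ e))ˣ ⧸ π.ker) = Nat.card (ZMod p)ˣ :=
      Nat.card_congr (QuotientGroup.quotientKerEquivOfSurjective π hsurj).toEquiv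
    have h3 : Nat.card (ZMod p)ˣ = p - 1 := by
      rw [Nat.card_eq_fintype_card, ZMod.card_units]
    have h4 : Nat.card (ZMod (p ^ e))ˣ = p ^ (e - 1) * (p - 1) := by
      rw [Nat.card_eq_fintype_card, ZMod.card_units_eq_totient, Nat.totient_prime_pow hp he]
    calc Nat.card π.ker * (p - 1)
        = Nat.card ((ZMod (p ^ e))ˣ ⧸ π.ker) * Nat.card π.ker := by rw [h2, h3, mul_comm]
      _ = p ^ (e - 1) * (p - 1) := by rw [← h1, h4]
  have hppos : 0 < p - 1 := by
    have := hp.two_le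
    omega
  have hkcard : Nat.card π.ker = p ^ (e - 1) :=
    Nat.eq_of_mul_eq_mul_right hppos hcard
  have hword : w ^ (p ^ (e - 1)) = 1 := by
    have hsub : (⟨w, hwker⟩ : π.ker) ^ (Nat.card π.ker) = 1 := pow_card_eq_one'
    rw [hkcard] at hsub
    simpa using congrArg (Subgroup.subtype π.ker) hsub
  obtain ⟨t, ht⟩ := hodd.pow (n := e - 1)
  have hwsq : (w ^ (t + 1)) * (w ^ (t + 1)) = w := by
    rw [← pow_add]
    have haux : (t + 1) + (t + 1) = (p ^ (e - 1)) + 1 := by omega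
    rw [haux, pow_succ, hword, one_mul]
  have hfinal : Qe = (w ^ (t + 1) * Z) * (w ^ (t + 1) * Z) := by
    rw [mul_mul_mul_comm, hwsq, hw]
    rw [inv_mul_cancel_right]
  refine ⟨((w ^ (t + 1) * Z : (ZMod (p ^ e))ˣ) : ZMod (p ^ e)), ?_⟩
  rw [← ZMod.coe_unitOfCoprime q hcpe, ← hQe, hfinal, Units.val_mul]

/-- CRT for squares. -/
lemma isSquare_crt (q m₁ m₂ : ℕ) (h : Nat.Coprime m₁ m₂)
    (h1 : IsSquare (q : ZMod m₁)) (h2 : IsSquare (q : ZMod m₂)) :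
    IsSquare (q : ZMod (m₁ * m₂)) := by
  obtain ⟨x₁, hx₁⟩ := h1
  obtain ⟨x₂, hx₂⟩ := h2
  refine ⟨(ZMod.chineseRemainder h).symm (x₁, x₂), ?_⟩
  apply (ZMod.chineseRemainder h).injective
  rw [map_mul, RingEquiv.apply_symm_apply, map_natCast]
  refine Prod.ext ?_ ?_
  · simpa using hx₁
  · simpa using hx₂

/-- Construction of a splitting mod `p^e` when `q` is a square mod `p`. -/
lemma spl_prime_pow (q p e : ℕ) (hp : p.Prime) (hodd : Odd p) (hc : Nat.Coprime q p)
    (he : 0 < e) (hsq : IsSquare (q : ZMod p)) : Spl q (p ^ e) := by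
  haveI : Fact p.Prime := ⟨hp⟩
  haveI : NeZero (p ^ e) := ⟨pow_ne_zero e hp.pos.ne'⟩
  set uP : ZMod (p ^ e) → ZMod p :=
    fun x => ((x.val / p ^ ((x.val).factorization p) : ℕ) : ZMod p) with huP
  have key : ∀ (t : ℕ), t.Coprime p → ∀ x : ZMod (p ^ e), x ≠ 0 →
      uP ((t : ZMod (p ^ e)) * x) = (t : ZMod p) * uP x := by
    intro t hct x hx
    set v := x.val with hv
    have hv0 : v ≠ 0 := fun hh => hx ((ZMod.val_eq_zero x).mp hh)
    set j := v.factorization p with hj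
    have hpj : p ^ j ∣ v := Nat.ordProj_dvd v p
    set u := v / p ^ j with hu
    have hvu : p ^ j * u = v := Nat.mul_div_cancel' hpj
    have hje : j < e := by
      by_contra hle
      push_neg at hle
      have hdv : p ^ e ∣ v := dvd_trans (pow_dvd_pow p hle) hpj
      have h1 := Nat.le_of_dvd (Nat.pos_of_ne_zero hv0) hdv
      have h2 : v < p ^ e := ZMod.val_lt x
      omega
    have ht0 : t ≠ 0 := by
      rintro rfl
      rw [Nat.coprime_zero_left] at hct
      have := hp.two_le
      omega
    have hxmul_ne : (t : ZMod (p ^ e)) * x ≠ 0 := by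
      have hco : t.Coprime (p ^ e) := hct.pow_right e
      rw [← ZMod.coe_unitOfCoprime t hco]
      exact fun hh => hx ((Units.mul_right_eq_zero _).mp hh)
    set w := ((t : ZMod (p ^ e)) * x).val with hwdef
    have hw : w = (t * v) % p ^ e := by
      rw [hwdef, ZMod.val_mul, ZMod.val_natCast, Nat.mod_mul_mod]
    have hw0 : w ≠ 0 := fun hh => hxmul_ne ((ZMod.val_eq_zero _).mp hh)
    set d := (t * v) / p ^ e with hd
    have htv : t * v = p ^ e * d + w := by
      rw [hw, hd]
      exact (Nat.div_add_mod (t * v) (p ^ e)).symm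
    have hfactv : (t * v).factorization p = j := by
      rw [Nat.factorization_mul ht0 hv0]
      have hpt : ¬ p ∣ t := by
        intro hh
        have := Nat.Coprime.eq_one_of_dvd hct.symm hh
        have := hp.two_le
        omega
      simp [Nat.factorization_eq_zero_of_not_dvd hpt, hj]
    have h1w : p ^ j ∣ w := by
      have hjv : p ^ j ∣ t * v := Dvd.dvd.mul_left hpj t
      have hje' : p ^ j ∣ p ^ e * d := Dvd.dvd.mul_right (pow_dvd_pow p hje.le) d
      have hwe : w = t * v - p ^ e * d := by omega
      rw [hwe]
      exact Nat.dvd_sub hjv hje'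
    have h2w : ¬ p ^ (j + 1) ∣ w := by
      intro hcon
      have hdvd2 : p ^ (j + 1) ∣ t * v := by
        have hppd : p ^ (j + 1) ∣ p ^ e * d :=
          Dvd.dvd.mul_right (pow_dvd_pow p (by omega : j + 1 ≤ e)) d
        rw [htv]
        exact Nat.dvd_add hppd hcon
      have := (Nat.Prime.pow_dvd_iff_le_factorization hp
        (Nat.mul_ne_zero ht0 hv0)).mp hdvd2
      rw [hfactv] at this
      omega
    have hfw : w.factorization p = j := by
      have hl : j ≤ w.factorization p :=
        (Nat.Prime.pow_dvd_iff_le_factorization hp hw0).mp h1w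
      have hr : ¬ (j + 1 ≤ w.factorization p) := fun hh =>
        h2w ((Nat.Prime.pow_dvd_iff_le_factorization hp hw0).mpr hh)
      omega
    have hkey : t * u = p ^ (e - j) * d + w / p ^ j := by
      apply Nat.eq_of_mul_eq_mul_left (pow_pos hp.pos j)
      calc p ^ j * (t * u) = t * (p ^ j * u) := by ring
        _ = t * v := by rw [hvu]
        _ = p ^ e * d + w := htv
        _ = p ^ j * (p ^ (e - j) * d) + p ^ j * (w / p ^ j) := by
            rw [Nat.mul_div_cancel' h1w, ← mul_assoc, ← pow_add,
              (by omega : j + (e - j) = e)]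
        _ = p ^ j * (p ^ (e - j) * d + w / p ^ j) := by ring
    show ((w / p ^ (w.factorization p) : ℕ) : ZMod p) = (t : ZMod p) * ((u : ℕ) : ZMod p)
    rw [hfw]
    have hcast := congrArg (fun z : ℕ => (z : ZMod p)) hkey
    push_cast at hcast
    rw [ZMod.natCast_self, zero_pow (by omega : e - j ≠ 0), zero_mul, zero_add] at hcast
    exact hcast.symm
  have hUne : ∀ x : ZMod (p ^ e), x ≠ 0 → uP x ≠ 0 := by
    intro x hx hzero
    have hv0 : x.val ≠ 0 := fun hh => hx ((ZMod.val_eq_zero x).mp hh)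
    rw [huP] at hzero
    rw [ZMod.natCast_eq_zero_iff] at hzero
    exact Nat.not_dvd_ordCompl hp hv0 hzero
  -- choose a nonsquare b mod p
  have hchar : ringChar (ZMod p) ≠ 2 := by
    rw [ZMod.ringChar_zmod_n]
    have := Nat.odd_iff.mp hodd
    omega
  obtain ⟨b, hb⟩ := FiniteField.exists_nonsquare hchar
  have hb0 : b ≠ 0 := fun hh => hb (hh ▸ ⟨0, (mul_zero 0).symm⟩)
  have hχb : quadraticChar (ZMod p) b = -1 :=
    quadraticChar_neg_one_iff_not_isSquare.mpr hb
  have hqne : (q : ZMod p) ≠ 0 := by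
    rw [← ZMod.coe_unitOfCoprime q hc]
    exact Units.ne_zero _
  have hχq : quadraticChar (ZMod p) (q : ZMod p) = 1 :=
    (quadraticChar_one_iff_isSquare hqne).mpr hsq
  -- the unit a
  have hbvp : ¬ p ∣ b.val := by
    intro hh
    have := Nat.eq_zero_of_dvd_of_lt hh (ZMod.val_lt b)
    exact hb0 ((ZMod.val_eq_zero b).mp this)
  have hAp : (b.val).Coprime p := ((Nat.Prime.coprime_iff_not_dvd hp).mpr hbvp).symm
  have hAcope : (b.val).Coprime (p ^ e) := hAp.pow_right e
  have hAb : ((b.val : ℕ) : ZMod p) = b := by rw [ZMod.natCast_val, ZMod.cast_id]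
  refine ⟨ZMod.unitOfCoprime b.val hAcope,
    fun x => quadraticChar (ZMod p) (uP x) = 1, fun x hx => ?_⟩
  have hune := hUne x hx
  constructor
  · show quadraticChar (ZMod p) (uP ((q : ZMod (p ^ e)) * x)) = 1 ↔
      quadraticChar (ZMod p) (uP x) = 1
    rw [key q hc x hx, map_mul, hχq, one_mul]
  · show quadraticChar (ZMod p) (uP
        (((ZMod.unitOfCoprime b.val hAcope : (ZMod (p ^ e))ˣ) : ZMod (p ^ e)) * x)) = 1 ↔
      ¬ quadraticChar (ZMod p) (uP x) = 1
    rw [ZMod.coe_unitOfCoprime, key b.val hAp x hx, hAb, map_mul, hχb]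
    rcases quadraticChar_dichotomy hune with hone | hneg
    · rw [hone]
      norm_num
    · rw [hneg]
      norm_num

/-- Combining splittings via CRT. -/
lemma spl_crt (q m₁ m₂ : ℕ) (h : Nat.Coprime m₁ m₂)
    (hq1 : Nat.Coprime q m₁) (hq2 : Nat.Coprime q m₂)
    (h1 : Spl q m₁) (h2 : Spl q m₂) : Spl q (m₁ * m₂) := by
  obtain ⟨a₁, c₁, hc₁⟩ := h1
  obtain ⟨a₂, c₂, hc₂⟩ := h2
  set φ := ZMod.chineseRemainder h with hφ
  set U : (ZMod m₁ × ZMod m₂)ˣ :=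
    ⟨((a₁ : ZMod m₁), (a₂ : ZMod m₂)), (((a₁⁻¹ : (ZMod m₁)ˣ) : ZMod m₁), ((a₂⁻¹ : (ZMod m₂)ˣ) : ZMod m₂)),
      by rw [Prod.mk_mul_mk]; simp, by rw [Prod.mk_mul_mk]; simp⟩ with hU
  set A : (ZMod (m₁ * m₂))ˣ := Units.map φ.symm.toRingHom.toMonoidHom U with hAdef
  have hφa : φ ((A : (ZMod (m₁ * m₂))ˣ) : ZMod (m₁ * m₂)) = ((a₁ : ZMod m₁), (a₂ : ZMod m₂)) := by
    show φ (φ.symm _) = _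
    exact φ.apply_symm_apply _
  refine ⟨A, fun y => if (φ y).2 = 0 then c₁ (φ y).1 else c₂ (φ y).2, fun x hx => ?_⟩
  have hker : φ x ≠ 0 := fun hh => hx (by
    have := congrArg φ.symm hh
    rwa [RingEquiv.symm_apply_apply, map_zero] at this)
  have hqf : ∀ y : ZMod (m₁ * m₂),
      (φ ((q : ZMod (m₁ * m₂)) * y)).1 = (q : ZMod m₁) * (φ y).1 := by
    intro y; rw [map_mul, map_natCast, Prod.fst_mul, Prod.fst_natCast]
  have hqs : ∀ y : ZMod (m₁ * m₂),
      (φ ((q : ZMod (m₁ * m₂)) * y)).2 = (q : ZMod m₂) * (φ y).2 := by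
    intro y; rw [map_mul, map_natCast, Prod.snd_mul, Prod.snd_natCast]
  have haf : (φ ((A : ZMod (m₁ * m₂)) * x)).1 = (a₁ : ZMod m₁) * (φ x).1 := by
    rw [map_mul, hφa, Prod.fst_mul]
  have has : (φ ((A : ZMod (m₁ * m₂)) * x)).2 = (a₂ : ZMod m₂) * (φ x).2 := by
    rw [map_mul, hφa, Prod.snd_mul]
  have hqz₂ : ∀ z : ZMod m₂, z ≠ 0 → (q : ZMod m₂) * z ≠ 0 := by
    intro z hz
    rw [← ZMod.coe_unitOfCoprime q hq2]
    exact fun hh => hz ((Units.mul_right_eq_zero _).mp hh)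
  have haz₂ : ∀ z : ZMod m₂, z ≠ 0 → (a₂ : ZMod m₂) * z ≠ 0 := by
    intro z hz
    exact fun hh => hz ((Units.mul_right_eq_zero a₂).mp hh)
  have hfst : (φ x).2 = 0 → (φ x).1 ≠ 0 := by
    intro h2 h1
    exact hker (Prod.ext h1 h2)
  constructor
  · show (if (φ ((q : ZMod (m₁ * m₂)) * x)).2 = 0 then c₁ (φ ((q : ZMod (m₁ * m₂)) * x)).1
        else c₂ (φ ((q : ZMod (m₁ * m₂)) * x)).2) ↔
        (if (φ x).2 = 0 then c₁ (φ x).1 else c₂ (φ x).2)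
    by_cases h2 : (φ x).2 = 0
    · have hq2z : (φ ((q : ZMod (m₁ * m₂)) * x)).2 = 0 := by rw [hqs, h2, mul_zero]
      rw [if_pos hq2z, if_pos h2, hqf]
      exact (hc₁ _ (hfst h2)).1
    · have hq2z : (φ ((q : ZMod (m₁ * m₂)) * x)).2 ≠ 0 := by rw [hqs]; exact hqz₂ _ h2
      rw [if_neg hq2z, if_neg h2, hqs]
      exact (hc₂ _ h2).1
  · show (if (φ ((A : ZMod (m₁ * m₂)) * x)).2 = 0 then c₁ (φ ((A : ZMod (m₁ * m₂)) * x)).1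
        else c₂ (φ ((A : ZMod (m₁ * m₂)) * x)).2) ↔
        ¬ (if (φ x).2 = 0 then c₁ (φ x).1 else c₂ (φ x).2)
    by_cases h2 : (φ x).2 = 0
    · have ha2z : (φ ((A : ZMod (m₁ * m₂)) * x)).2 = 0 := by rw [has, h2, mul_zero]
      rw [if_pos ha2z, if_pos h2, haf]
      exact (hc₁ _ (hfst h2)).2
    · have ha2z : (φ ((A : ZMod (m₁ * m₂)) * x)).2 ≠ 0 := by rw [has]; exact haz₂ _ h2
      rw [if_neg ha2z, if_neg h2, has]
      exact (hc₂ _ h2).2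

lemma thmA (q : ℕ) : ∀ m, Odd m → Nat.Coprime q m → IsSquare (q : ZMod m) → Spl q m := by
  intro m
  induction m using Nat.recOnPosPrimePosCoprime with
  | prime_pow p e hpp he =>
    intro hodd hcop hsq
    have hp' : p.Prime := hpp
    have hpodd : Odd p := odd_of_odd_pow he hodd
    have hdvd : p ∣ p ^ e := dvd_pow_self p he.ne'
    have hcp : Nat.Coprime q p := Nat.Coprime.coprime_dvd_right hdvd hcop
    have hsqp : IsSquare (q : ZMod p) := isSquare_cast hdvd hsq
    exact spl_prime_pow q p e hp' hpodd hcp he hsqp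
  | zero => intro h; exact absurd h (by decide)
  | one =>
    intro _ _ _
    exact ⟨1, fun _ => True, fun x hx => absurd (Subsingleton.elim x 0) hx⟩
  | coprime a b ha hb hab iha ihb =>
    intro hodd hcop hsq
    have hodda : Odd a := (Nat.odd_mul.mp hodd).1
    have hoddb : Odd b := (Nat.odd_mul.mp hodd).2
    have hda : a ∣ a * b := Dvd.intro b rfl
    have hdb : b ∣ a * b := Dvd.intro_left a rfl
    have hsqa : IsSquare (q : ZMod a) := isSquare_cast hda hsq
    have hsqb : IsSquare (q : ZMod b) := isSquare_cast hdb hsq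
    exact spl_crt q a b hab (hcop.coprime_dvd_right hda) (hcop.coprime_dvd_right hdb)
      (iha hodda (hcop.coprime_dvd_right hda) hsqa) (ihb hoddb (hcop.coprime_dvd_right hdb) hsqb)

lemma thmB (q : ℕ) : ∀ m, Odd m → Nat.Coprime q m → Spl q m → IsSquare (q : ZMod m) := by
  have key : ∀ m, Odd m → Nat.Coprime q m →
      (∀ p, p.Prime → p ∣ m → IsSquare (q : ZMod p)) → IsSquare (q : ZMod m) := by
    intro m
    induction m using Nat.recOnPosPrimePosCoprime with
    | prime_pow p e hpp he =>
      intro hodd hcop hall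
      have hp' : p.Prime := hpp
      have hpodd : Odd p := odd_of_odd_pow he hodd
      have hdvd : p ∣ p ^ e := dvd_pow_self p he.ne'
      exact isSquare_lift q p e hp' hpodd (hcop.coprime_dvd_right hdvd) he
        (hall p hp' hdvd)
    | zero => intro h; exact absurd h (by decide)
    | one => intro _ _ _; exact ⟨0, Subsingleton.elim _ _⟩
    | coprime a b ha hb hab iha ihb =>
      intro hodd hcop hall
      have hda : a ∣ a * b := Dvd.intro b rfl
      have hdb : b ∣ a * b := Dvd.intro_left a rfl
      exact isSquare_crt q a b hab
        (iha (Nat.odd_mul.mp hodd).1 (hcop.coprime_dvd_right hda)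
          (fun p hp hpd => hall p hp (hpd.trans hda)))
        (ihb (Nat.odd_mul.mp hodd).2 (hcop.coprime_dvd_right hdb)
          (fun p hp hpd => hall p hp (hpd.trans hdb)))
  intro m hodd hcop hs
  refine key m hodd hcop (fun p hp hpm => ?_)
  have hpodd : Odd p := hp.odd_of_ne_two (by
    rintro rfl
    obtain ⟨k, rfl⟩ := hpm
    have := Nat.odd_iff.mp hodd
    omega)
  exact spl_prime_isSquare q p hp hpodd (hcop.coprime_dvd_right hpm)
    (spl_restrict q m p hodd.pos hp hpm hs)

/-- A splitting of `n` over `F_q` (partition `{S₀,S₁}` of the nonzero residues mod `n`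
into unions of `q`-ary cyclotomic cosets interchanged by multiplication by a unit `a`)
exists if and only if `q` is a quadratic residue modulo `n`. -/
theorem stmt_6 (n q : ℕ) (hn : Odd n) (hpos : 0 < n) (hq : IsPrimePow q)
    (h : Nat.Coprime q n) :
    (∃ S₀ S₁ : Set (ZMod n), ∃ a : (ZMod n)ˣ,
      S₀ ∩ S₁ = ∅ ∧ S₀ ∪ S₁ = {x : ZMod n | x ≠ 0} ∧
      (fun x => (q : ZMod n) * x) '' S₀ = S₀ ∧
      (fun x => (q : ZMod n) * x) '' S₁ = S₁ ∧
      (fun x => (a : ZMod n) * x) '' S₀ = S₁ ∧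
      (fun x => (a : ZMod n) * x) '' S₁ = S₀)
    ↔ ∃ x : ZMod n, x ^ 2 = (q : ZMod n) := by
  haveI : NeZero n := ⟨hpos.ne'⟩
  set Q : (ZMod n)ˣ := ZMod.unitOfCoprime q h with hQ
  have hqu : ((Q : (ZMod n)ˣ) : ZMod n) = (q : ZMod n) := ZMod.coe_unitOfCoprime q h
  have memiff : ∀ (u : (ZMod n)ˣ) (S T : Set (ZMod n)),
      (fun x => (u : ZMod n) * x) '' S = T →
      ∀ z, z ∈ S ↔ (u : ZMod n) * z ∈ T := by
    rintro u S T rfl z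
    constructor
    · exact fun hz => Set.mem_image_of_mem _ hz
    · rintro ⟨y, hy, hy2⟩
      rwa [← (Units.mul_right_inj u).mp hy2]
  constructor
  · rintro ⟨S₀, S₁, a, hdisj, huniv, hq0, hq1, ha0, ha1⟩
    have hdisj' : ∀ z, z ∈ S₀ → z ∈ S₁ → False := by
      intro z h1 h2
      have : z ∈ S₀ ∩ S₁ := ⟨h1, h2⟩
      rw [hdisj] at this
      exact this
    rw [← hqu] at hq0
    have hspl : Spl q n := by
      refine ⟨a, (· ∈ S₀), fun x hx => ?_⟩
      have hx01 : x ∈ S₀ ∪ S₁ := by rw [huniv]; exact hx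
      have h1 := memiff a S₀ S₁ ha0 x
      have h2 := memiff a S₁ S₀ ha1 x
      constructor
      · rw [← hqu]
        exact (memiff Q S₀ S₀ hq0 x).symm
      · constructor
        · intro hax hxS0
          exact hdisj' _ hax (h1.mp hxS0)
        · intro hxnot
          rcases hx01 with hmem | hmem
          · exact absurd hmem hxnot
          · exact h2.mp hmem
    obtain ⟨r, hr⟩ := thmB q n hn h hspl
    exact ⟨r, by rw [sq]; exact hr.symm⟩
  · rintro ⟨x, hx⟩
    obtain ⟨a, c, hc⟩ := thmA q n hn h ⟨x, by rw [← hx, sq]⟩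
    have himg : ∀ (u : (ZMod n)ˣ) (P R : ZMod n → Prop),
        (∀ x : ZMod n, x ≠ 0 → (P ((u : ZMod n) * x) ↔ R x)) →
        (fun x => (u : ZMod n) * x) '' {x | x ≠ 0 ∧ R x} = {y | y ≠ 0 ∧ P y} := by
      intro u P R hPR
      ext y
      constructor
      · rintro ⟨z, ⟨hz0, hR⟩, rfl⟩
        exact ⟨fun hh => hz0 ((Units.mul_right_eq_zero u).mp hh), (hPR z hz0).mpr hR⟩
      · rintro ⟨hy0, hP⟩
        have heq : (u : ZMod n) * (((u⁻¹ : (ZMod n)ˣ) : ZMod n) * y) = y := by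
          rw [← mul_assoc]
          simp
        have hz0 : ((u⁻¹ : (ZMod n)ˣ) : ZMod n) * y ≠ 0 :=
          fun hh => hy0 ((Units.mul_right_eq_zero u⁻¹).mp hh)
        refine ⟨((u⁻¹ : (ZMod n)ˣ) : ZMod n) * y, ⟨hz0, ?_⟩, heq⟩
        have := hPR _ hz0
        rw [heq] at this
        exact this.mp hP
    refine ⟨{x | x ≠ 0 ∧ c x}, {x | x ≠ 0 ∧ ¬ c x}, a, ?_, ?_, ?_, ?_, ?_, ?_⟩
    · ext z
      simp only [Set.mem_inter_iff, Set.mem_setOf_eq, Set.mem_empty_iff_false, iff_false]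
      rintro ⟨⟨_, h1⟩, ⟨_, h2⟩⟩
      exact h2 h1
    · ext z
      simp only [Set.mem_union, Set.mem_setOf_eq]
      constructor
      · rintro (⟨h1, _⟩ | ⟨h1, _⟩) <;> exact h1
      · intro h1
        by_cases hcz : c z
        · exact Or.inl ⟨h1, hcz⟩
        · exact Or.inr ⟨h1, hcz⟩
    · rw [← hqu]
      exact himg Q c c (fun z hz => by rw [hqu]; exact (hc z hz).1)
    · rw [← hqu]
      exact himg Q (fun y => ¬ c y) (fun y => ¬ c y)
        (fun z hz => by rw [hqu]; exact not_congr (hc z hz).1)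
    · exact himg a (fun y => ¬ c y) c (fun z hz => by show ¬ c ((a : ZMod n) * z) ↔ c z; rw [(hc z hz).2]; exact not_not)
    · exact himg a c (fun y => ¬ c y) (fun z hz => (hc z hz).2)
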